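/- Let 0 < c₁ ≤ c₂ < 1 and δ > 0, and let A : ℝ → ℝ be differentiable with A(0) = 0 and c₁ ≤ A′(t) ≤ c₂ for all t ∈ ℝ. Then there exist constants C > 0 and α₀ ≥ 1 such that for every α ∈ ℝ with |α| ≥ α₀: (i) ∫_{|t| ≤ δ} |t| (1 + t²(A(t) − α)²)^{-1} dt ≤ C/|α|; (ii) ∫_{t ∈ ℝ : |t| ≥ δ and |A(t) − α| ≥ δ} |t| (1 + t²(A(t) − α)²)^{-1} dt ≤ C/|α|. -/

import Mathlib

open MeasureTheory Set

lemma aux_right (δ : ℝ) (hδ : 0 < δ) :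
    IntegrableOn (fun u : ℝ => (u ^ 2)⁻¹) (Ici δ) ∧
      (∫ u in Ici δ, (u ^ 2)⁻¹) = 1 / δ := by
  have hEq : ∀ u ∈ Ioi δ, u ^ (-2 : ℝ) = (u ^ 2)⁻¹ := by
    intro u hu
    have hu0 : (0:ℝ) ≤ u := (hδ.trans hu).le
    rw [Real.rpow_neg hu0, show (2:ℝ) = ((2:ℕ):ℝ) by norm_num, Real.rpow_natCast]
  have hint : IntegrableOn (fun u : ℝ => (u ^ 2)⁻¹) (Ioi δ) :=
    (integrableOn_Ioi_rpow_of_lt (by norm_num : (-2:ℝ) < -1) hδ).congr_fun hEq measurableSet_Ioi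
  constructor
  · exact (integrableOn_Ici_iff_integrableOn_Ioi).mpr hint
  · rw [integral_Ici_eq_integral_Ioi,
      ← setIntegral_congr_fun measurableSet_Ioi hEq,
      integral_Ioi_rpow_of_lt (by norm_num : (-2:ℝ) < -1) hδ]
    norm_num [Real.rpow_neg_one]

lemma aux_union (δ : ℝ) (hδ : 0 < δ) :
    IntegrableOn (fun u : ℝ => (u ^ 2)⁻¹) (Iic (-δ) ∪ Ici δ) ∧
      (∫ u in Iic (-δ) ∪ Ici δ, (u ^ 2)⁻¹) = 2 / δ := by
  obtain ⟨hR, hRv⟩ := aux_right δ hδ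
  have m : MeasurableEmbedding fun x : ℝ => -x := (Homeomorph.neg ℝ).measurableEmbedding
  have hL : IntegrableOn (fun u : ℝ => (u ^ 2)⁻¹) (Iic (-δ)) := by
    rw [← Measure.map_neg_eq_self (volume : Measure ℝ), m.integrableOn_map_iff]
    simp_rw [Function.comp_def, neg_preimage, neg_Iic, neg_neg]
    simpa [neg_sq] using hR
  have hLv : (∫ u in Iic (-δ), (u ^ 2)⁻¹) = 1 / δ := by
    have := integral_comp_neg_Iic (-δ) (fun u : ℝ => (u ^ 2)⁻¹)
    simp only [neg_sq, neg_neg] at this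
    rw [this, ← integral_Ici_eq_integral_Ioi, hRv]
  have hdisj : Disjoint (Iic (-δ)) (Ici δ) := by
    exact Iic_disjoint_Ici.mpr (by linarith)
  constructor
  · exact hL.union hR
  · rw [setIntegral_union hdisj measurableSet_Ici hL hR, hRv, hLv]; ring

lemma aux_absA (c₁ c₂ : ℝ) (hc₁ : 0 < c₁) (hc : c₁ ≤ c₂)
    (A : ℝ → ℝ) (hA : Differentiable ℝ A) (hA0 : A 0 = 0)
    (hA' : ∀ t : ℝ, c₁ ≤ deriv A t ∧ deriv A t ≤ c₂) :
    ∀ t : ℝ, |A t| ≤ c₂ * |t| := by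
  have h2 : Monotone (fun t : ℝ => c₂ * t - A t) := by
    apply monotone_of_deriv_nonneg
    · exact (differentiable_id.const_mul c₂).sub hA
    · intro x
      have hd : HasDerivAt (fun t : ℝ => c₂ * t - A t) (c₂ * 1 - deriv A x) x :=
        ((hasDerivAt_id x).const_mul c₂).sub (hA x).hasDerivAt
      rw [hd.deriv]
      have := (hA' x).2; linarith
  have h1 : Monotone (fun t : ℝ => A t - c₁ * t) := by
    apply monotone_of_deriv_nonneg
    · exact hA.sub (differentiable_id.const_mul c₁)
    · intro x
      have hd : HasDerivAt (fun t : ℝ => A t - c₁ * t) (deriv A x - c₁ * 1) x :=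
        (hA x).hasDerivAt.sub ((hasDerivAt_id x).const_mul c₁)
      rw [hd.deriv]
      have := (hA' x).1; linarith
  intro t
  rcases le_total 0 t with ht | ht
  · have e2 := h2 ht
    have e1 := h1 ht
    simp only [mul_zero, hA0, sub_zero, zero_sub, neg_nonpos] at e2 e1
    rw [abs_of_nonneg ht]
    rw [abs_of_nonneg (by nlinarith : (0:ℝ) ≤ A t)]
    linarith
  · have e2 := h2 ht
    have e1 := h1 ht
    simp only [mul_zero, hA0, sub_zero, zero_sub, neg_nonpos] at e2 e1
    rw [abs_of_nonpos ht]
    rw [abs_of_nonpos (by nlinarith : A t ≤ 0)]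
    linarith

set_option maxHeartbeats 1000000 in
/-- Model integral estimates for the derivative bounds `∂_α g₁, ∂_α g₃ = O(|α|⁻¹)`:
`A` models the rescaled critical-direction function (`A(0) = 0`, `c₁ ≤ A' ≤ c₂ < 1`). -/
theorem stmt6 (c₁ c₂ δ : ℝ) (hc₁ : 0 < c₁) (hc : c₁ ≤ c₂) (hc₂ : c₂ < 1) (hδ : 0 < δ)
    (A : ℝ → ℝ) (hA : Differentiable ℝ A) (hA0 : A 0 = 0)
    (hA' : ∀ t : ℝ, c₁ ≤ deriv A t ∧ deriv A t ≤ c₂) :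
    ∃ C > 0, ∃ α₀ : ℝ, 1 ≤ α₀ ∧ ∀ α : ℝ, α₀ ≤ |α| →
      (∫ t in Icc (-δ) δ, |t| * (1 + t ^ 2 * (A t - α) ^ 2)⁻¹) ≤ C / |α| ∧
      (∫ t in {t : ℝ | δ ≤ |t| ∧ δ ≤ |A t - α|},
          |t| * (1 + t ^ 2 * (A t - α) ^ 2)⁻¹) ≤ C / |α| := by
  have hAc : Continuous A := hA.continuous
  have hAbs : ∀ t : ℝ, |A t| ≤ c₂ * |t| := aux_absA c₁ c₂ hc₁ hc A hA hA0 hA'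
  set C : ℝ := 2 * δ + 4 / δ + 4 / (c₁ * δ) + 1 with hCdef
  have hC0 : 0 < C := by positivity
  refine ⟨C, hC0, 2 * δ + 2, by linarith, fun α hα => ?_⟩
  set M : ℝ := |α| with hMdef
  have hM : 2 * δ + 2 ≤ M := hα
  have hM0 : 0 < M := by linarith
  set f : ℝ → ℝ := fun t => |t| * (1 + t ^ 2 * (A t - α) ^ 2)⁻¹ with hfdef
  have hf0 : ∀ t, 0 ≤ f t := fun t => by positivity
  have hfc : Continuous f := by
    apply continuous_abs.mul
    apply Continuous.inv₀
    · continuity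
    · intro x; positivity
  -- lower bound on |A t - α| when |t| is not too large
  have hgLB : ∀ t : ℝ, |t| ≤ M / 2 → M / 2 ≤ |A t - α| := by
    intro t ht
    have h1 : |A t| ≤ c₂ * |t| := hAbs t
    have h2 : c₂ * |t| ≤ |t| := by nlinarith [abs_nonneg t]
    have h3 : M - |A t| ≤ |A t - α| := by
      have := abs_sub_abs_le_abs_sub α (A t)
      rw [abs_sub_comm] at this
      linarith
    linarith
  ----------------------------------------------------------------
  -- Part (i)
  ----------------------------------------------------------------
  have part1 : (∫ t in Icc (-δ) δ, f t) ≤ C / M := by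
    have hbound : ∀ t ∈ Icc (-δ) δ, ‖f t‖ ≤ 1 / M := by
      intro t ht
      rw [Real.norm_eq_abs, abs_of_nonneg (hf0 t)]
      rcases eq_or_ne t 0 with rfl | htne
      · simp only [hfdef, abs_zero, zero_mul]
        positivity
      · have h1t : 0 < |t| := abs_pos.mpr htne
        have htle : |t| ≤ δ := abs_le.mpr ⟨ht.1, ht.2⟩
        have hg : M / 2 ≤ |A t - α| := hgLB t (by linarith)
        have habs : t ^ 2 * (A t - α) ^ 2 = (|t| * |A t - α|) ^ 2 := by
          rw [mul_pow, sq_abs, sq_abs]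
        have hkey : |t| * M ≤ 1 + t ^ 2 * (A t - α) ^ 2 := by
          nlinarith [sq_nonneg (|t| * |A t - α| - 1),
            mul_le_mul_of_nonneg_left hg (abs_nonneg t)]
        have hpos : 0 < |t| * M := by positivity
        calc |t| * (1 + t ^ 2 * (A t - α) ^ 2)⁻¹
            ≤ |t| * (|t| * M)⁻¹ :=
              mul_le_mul_of_nonneg_left (inv_anti₀ hpos hkey) (abs_nonneg t)
          _ = 1 / M := by field_simp
    have hfin : volume (Icc (-δ) δ) < ⊤ := measure_Icc_lt_top
    have hnorm := norm_setIntegral_le_of_norm_le_const (μ := volume) hfin hbound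
    have hvol : (volume (Icc (-δ) δ)).toReal = 2 * δ := by
      rw [Real.volume_Icc, ENNReal.toReal_ofReal (by linarith)]; ring
    rw [Real.norm_eq_abs, measureReal_def, hvol] at hnorm
    have : (∫ t in Icc (-δ) δ, f t) ≤ 1 / M * (2 * δ) :=
      (le_abs_self _).trans hnorm
    have h2 : 1 / M * (2 * δ) ≤ C / M := by
      have he : 1 / M * (2 * δ) = (2 * δ) / M := by ring
      rw [he]
      have h4 : 0 < 4 / δ := by positivity
      have h5 : 0 < 4 / (c₁ * δ) := by positivity
      gcongr
      simp only [hCdef]; linarith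
    linarith
  ---------------------------------------------------------------
  -- Part (ii)
  ----------------------------------------------------------------
  refine ⟨part1, ?_⟩
  set R : Set ℝ := {t : ℝ | δ ≤ |t| ∧ δ ≤ |A t - α|} with hRdef
  have hRc : IsClosed R := by
    have : R = {t : ℝ | δ ≤ |t|} ∩ {t : ℝ | δ ≤ |A t - α|} := rfl
    rw [this]
    exact (isClosed_le continuous_const continuous_abs).inter
      (isClosed_le continuous_const ((hAc.sub continuous_const).abs))
  have hRm : MeasurableSet R := hRc.measurableSet
  set s₂ : Set ℝ := R ∩ {t : ℝ | |t| ≤ M / 2} with hs2def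
  set s₁ : Set ℝ := R ∩ {t : ℝ | M / 2 < |t|} with hs1def
  have hs₂m : MeasurableSet s₂ :=
    hRm.inter (isClosed_le continuous_abs continuous_const).measurableSet
  have hs₁m : MeasurableSet s₁ :=
    hRm.inter (isOpen_lt continuous_const continuous_abs).measurableSet
  -- bounds on s₂
  have hb₂ : ∀ t ∈ s₂, ‖f t‖ ≤ 4 / (δ * M ^ 2) := by
    rintro t ⟨⟨htδ, htg⟩, htM⟩
    have htM' : |t| ≤ M / 2 := htM
    have h1t : 0 < |t| := lt_of_lt_of_le hδ htδ
    have hg : M / 2 ≤ |A t - α| := hgLB t htM'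
    have e3 : (|t| * |t|) * (|A t - α| * |A t - α|) = t ^ 2 * (A t - α) ^ 2 := by
      rw [abs_mul_abs_self, abs_mul_abs_self]; ring
    have h3 : δ * ((M / 2) * (M / 2)) ≤ |t| * (|A t - α| * |A t - α|) :=
      mul_le_mul htδ (mul_le_mul hg hg (by positivity) (abs_nonneg _))
        (by positivity) (abs_nonneg _)
    have hkey : δ * ((M / 2) * (M / 2)) * |t| ≤ 1 + t ^ 2 * (A t - α) ^ 2 := by
      nlinarith [mul_le_mul_of_nonneg_left h3 (abs_nonneg t), e3, abs_nonneg t]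
    rw [Real.norm_eq_abs, abs_of_nonneg (hf0 t)]
    have hpos : 0 < δ * ((M / 2) * (M / 2)) * |t| := by positivity
    calc |t| * (1 + t ^ 2 * (A t - α) ^ 2)⁻¹
        ≤ |t| * (δ * ((M / 2) * (M / 2)) * |t|)⁻¹ :=
          mul_le_mul_of_nonneg_left (inv_anti₀ hpos hkey) (abs_nonneg t)
      _ = 4 / (δ * M ^ 2) := by
          field_simp
          ring
  have hs₂sub : s₂ ⊆ Icc (-(M / 2)) (M / 2) := by
    rintro t ⟨_, htM⟩
    exact abs_le.mp htM
  have hμ₂le : volume s₂ ≤ ENNReal.ofReal M := by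
    calc volume s₂ ≤ volume (Icc (-(M / 2)) (M / 2)) := measure_mono hs₂sub
      _ = ENNReal.ofReal M := by rw [Real.volume_Icc]; congr 1; ring
  have hfin₂ : volume s₂ < ⊤ := lt_of_le_of_lt hμ₂le ENNReal.ofReal_lt_top
  have hIntf₂ : IntegrableOn f s₂ := by
    apply Integrable.mono' ((integrableOn_const_iff (C := 4 / (δ * M ^ 2))).mpr (Or.inr hfin₂))
      (hfc.aestronglyMeasurable.restrict)
    exact (ae_restrict_iff' hs₂m).mpr (ae_of_all _ hb₂)
  have hI₂ : (∫ t in s₂, f t) ≤ 4 / (δ * M ^ 2) * M := by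
    have hnorm := norm_setIntegral_le_of_norm_le_const (μ := volume) hfin₂ hb₂
    have htr : (volume s₂).toReal ≤ M := ENNReal.toReal_le_of_le_ofReal (by linarith) hμ₂le
    calc (∫ t in s₂, f t) ≤ |∫ t in s₂, f t| := le_abs_self _
      _ ≤ 4 / (δ * M ^ 2) * (volume s₂).toReal := by
          rw [← Real.norm_eq_abs]; exact hnorm
      _ ≤ 4 / (δ * M ^ 2) * M := mul_le_mul_of_nonneg_left htr (by positivity)
  -- s₁ : change of variables
  have hderiv : ∀ x ∈ s₁, HasDerivWithinAt (fun t => A t - α) (deriv A x) s₁ x :=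
    fun x _ => ((hA x).hasDerivAt.sub_const α).hasDerivWithinAt
  have hsmono : StrictMono (fun t => A t - α) := by
    apply strictMono_of_deriv_pos
    intro x
    rw [deriv_sub_const]
    linarith [(hA' x).1]
  have hinj : InjOn (fun t => A t - α) s₁ := hsmono.injective.injOn
  obtain ⟨hEint, hEval⟩ := aux_union δ hδ
  set img := (fun t => A t - α) '' s₁ with himgdef
  have himgsub : img ⊆ Iic (-δ) ∪ Ici δ := by
    rintro _ ⟨t, ⟨⟨_, hgt⟩, _⟩, rfl⟩
    rcases le_abs.mp hgt with h | h
    · right; exact h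
    · left; simp only [mem_Iic]; linarith
  have hJle : (∫ u in img, (u ^ 2)⁻¹) ≤ 2 / δ := by
    rw [← hEval]
    exact setIntegral_mono_set hEint (ae_of_all _ fun u => by positivity)
      (HasSubset.Subset.eventuallyLE himgsub)
  have hintimg : IntegrableOn (fun u : ℝ => (u ^ 2)⁻¹) img := hEint.mono_set himgsub
  have hCOV : (∫ u in img, (u ^ 2)⁻¹)
      = ∫ t in s₁, |deriv A t| • ((A t - α) ^ 2)⁻¹ :=
    integral_image_eq_integral_abs_deriv_smul (f := fun t => A t - α)
      (f' := fun t => deriv A t) hs₁m hderiv hinj (fun u : ℝ => (u ^ 2)⁻¹)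
  have hIntS : IntegrableOn (fun t => |deriv A t| • (((A t - α) ^ 2)⁻¹)) s₁ :=
    (integrableOn_image_iff_integrableOn_abs_deriv_smul (f := fun t => A t - α)
      (f' := fun t => deriv A t) hs₁m hderiv hinj (fun u : ℝ => (u ^ 2)⁻¹)).mp hintimg
  have hIntS' : IntegrableOn
      (fun t => 2 / (c₁ * M) * (|deriv A t| * ((A t - α) ^ 2)⁻¹)) s₁ := by
    simp only [smul_eq_mul] at hIntS
    exact hIntS.const_mul _
  have hb₁ : ∀ t ∈ s₁, f t ≤ 2 / (c₁ * M) * (|deriv A t| * ((A t - α) ^ 2)⁻¹) := by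
    rintro t ⟨⟨htδ, hgt⟩, htM⟩
    have htM' : M / 2 < |t| := htM
    have h1t : 0 < |t| := lt_of_lt_of_le hδ htδ
    have hg2 : 0 < (A t - α) ^ 2 := by nlinarith [sq_abs (A t - α)]
    have hda : c₁ ≤ |deriv A t| := le_trans (hA' t).1 (le_abs_self _)
    have step1 : f t ≤ (|t| * (A t - α) ^ 2)⁻¹ := by
      have hd1 : t ^ 2 * (A t - α) ^ 2 ≤ 1 + t ^ 2 * (A t - α) ^ 2 := by
        linarith [mul_nonneg (sq_nonneg t) (sq_nonneg (A t - α))]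
      have ht2 : 0 < t ^ 2 := by nlinarith [sq_abs t]
      have hdpos : 0 < t ^ 2 * (A t - α) ^ 2 := mul_pos ht2 hg2
      calc f t ≤ |t| * (t ^ 2 * (A t - α) ^ 2)⁻¹ :=
            mul_le_mul_of_nonneg_left (inv_anti₀ hdpos hd1) (abs_nonneg t)
        _ = (|t| * (A t - α) ^ 2)⁻¹ := by
            rw [show t ^ 2 = |t| * |t| from by rw [abs_mul_abs_self]; ring]
            rw [mul_inv, mul_inv, mul_inv, ← mul_assoc, ← mul_assoc,
              mul_inv_cancel₀ h1t.ne', one_mul]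
    have step2 : (|t| * (A t - α) ^ 2)⁻¹
        ≤ 2 / (c₁ * M) * (|deriv A t| * ((A t - α) ^ 2)⁻¹) := by
      rw [mul_inv]
      have hinvt : |t|⁻¹ ≤ 2 / M := by
        have h2M : 0 < M / 2 := by linarith
        have := inv_anti₀ h2M htM'.le
        rwa [inv_div] at this
      have he : 2 / (c₁ * M) * (c₁ * ((A t - α) ^ 2)⁻¹) = 2 / M * ((A t - α) ^ 2)⁻¹ := by
        field_simp
      calc |t|⁻¹ * ((A t - α) ^ 2)⁻¹ ≤ 2 / M * ((A t - α) ^ 2)⁻¹ :=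
            mul_le_mul_of_nonneg_right hinvt (by positivity)
        _ = 2 / (c₁ * M) * (c₁ * ((A t - α) ^ 2)⁻¹) := he.symm
        _ ≤ 2 / (c₁ * M) * (|deriv A t| * ((A t - α) ^ 2)⁻¹) := by
            refine mul_le_mul_of_nonneg_left ?_ (by positivity)
            exact mul_le_mul_of_nonneg_right hda (by positivity)
    exact step1.trans step2
  have hIntf₁ : IntegrableOn f s₁ := by
    apply Integrable.mono' hIntS' (hfc.aestronglyMeasurable.restrict)
    refine (ae_restrict_iff' hs₁m).mpr (ae_of_all _ fun t ht => ?_)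
    rw [Real.norm_eq_abs, abs_of_nonneg (hf0 t)]
    exact hb₁ t ht
  have hI₁ : (∫ t in s₁, f t) ≤ 2 / (c₁ * M) * (2 / δ) := by
    calc (∫ t in s₁, f t)
        ≤ ∫ t in s₁, 2 / (c₁ * M) * (|deriv A t| * ((A t - α) ^ 2)⁻¹) :=
          setIntegral_mono_on hIntf₁ hIntS' hs₁m hb₁
      _ = 2 / (c₁ * M) * ∫ t in s₁, |deriv A t| * ((A t - α) ^ 2)⁻¹ :=
          integral_const_mul _ _
      _ = 2 / (c₁ * M) * ∫ u in img, (u ^ 2)⁻¹ := by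
          rw [hCOV]; simp only [smul_eq_mul]
      _ ≤ 2 / (c₁ * M) * (2 / δ) := mul_le_mul_of_nonneg_left hJle (by positivity)
  -- combine
  have hdisj : Disjoint s₂ s₁ := by
    rw [Set.disjoint_left]
    intro t hts2 hts1
    exact absurd (show M / 2 < |t| from hts1.2)
      (not_lt.mpr (show |t| ≤ M / 2 from hts2.2))
  have hunion : R = s₂ ∪ s₁ := by
    ext t
    simp only [hs2def, hs1def, mem_union, mem_inter_iff, mem_setOf_eq]
    constructor
    · intro h
      rcases le_or_gt |t| (M / 2) with h' | h'
      · exact Or.inl ⟨h, h'⟩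
      · exact Or.inr ⟨h, h'⟩
    · rintro (⟨h, _⟩ | ⟨h, _⟩) <;> exact h
  have hsplit : (∫ t in R, f t) = (∫ t in s₂, f t) + (∫ t in s₁, f t) := by
    rw [hunion]
    exact setIntegral_union hdisj hs₁m hIntf₂ hIntf₁
  have harith : 4 / (δ * M ^ 2) * M + 2 / (c₁ * M) * (2 / δ) ≤ C / M := by
    have he : 4 / (δ * M ^ 2) * M + 2 / (c₁ * M) * (2 / δ) = (4 / δ + 4 / (c₁ * δ)) / M := by
      field_simp
      ring
    rw [he]
    gcongr
    simp only [hCdef]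
    linarith
  calc (∫ t in R, f t) = (∫ t in s₂, f t) + (∫ t in s₁, f t) := hsplit
    _ ≤ 4 / (δ * M ^ 2) * M + 2 / (c₁ * M) * (2 / δ) := add_le_add hI₂ hI₁
    _ ≤ C / M := harith
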